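/- Let (Δ_k)_{k≥0} be a nonincreasing sequence of nonnegative real numbers and C₁, C₂ > 0, θ > 0 constants such that Δ_{k+1} ≤ C₁(Δ_k − Δ_{k+1})^{θ} + C₂(Δ_k − Δ_{k+1}) for all k ≥ 0. If θ ≥ 1, then Δ_k converges to 0 linearly: there exist c > 0, ρ ∈ (0,1) and K such that Δ_k ≤ c ρ^k for all k ≥ K. If 0 < θ < 1, then Δ_k converges to 0 sublinearly with rate O(k^{−θ/(1−θ)}): there exists c > 0 such that Δ_k ≤ c k^{−θ/(1−θ)} for all k ≥ 1. -/

import Mathlib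

/-- Bernoulli for negative exponents: `1 - β h ≤ (1+h)^(-β)` for `β > 0`, `h ≥ 0`. -/
lemma stmt10_bern {β h : ℝ} (hβ : 0 < β) (hh : 0 ≤ h) : 1 - β * h ≤ (1 + h) ^ (-β) := by
  have h1 : (0:ℝ) < 1 + h := by linarith
  rcases le_or_gt (1 - β * h) 0 with h0 | h0
  · exact h0.trans (Real.rpow_pos_of_pos h1 _).le
  rcases le_or_gt 1 β with hb | hb
  · -- β ≥ 1 : use Bernoulli with s = -h/(1+h)
    set s : ℝ := -h / (1 + h) with hs
    have hs1 : -1 ≤ s := by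
      rw [hs, neg_div, neg_le, neg_neg, div_le_one h1]; linarith
    have h2 : 1 + s = (1 + h)⁻¹ := by
      rw [hs]; field_simp; ring
    have hB := one_add_mul_self_le_rpow_one_add hs1 hb
    rw [h2, Real.inv_rpow h1.le, ← Real.rpow_neg h1.le] at hB
    refine le_trans ?_ hB
    rw [hs]
    have h6 : h / (1 + h) ≤ h := by
      rw [div_le_iff₀ h1]; nlinarith
    have : β * (-h / (1 + h)) = -(β * (h / (1+h))) := by ring
    rw [this]
    nlinarith
  · -- β < 1
    have hB : (1 + h) ^ β ≤ 1 + β * h :=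
      rpow_one_add_le_one_add_mul_self (by linarith) hβ.le hb.le
    have h3 : (1 + h) ^ (-β) ≤ 1 := Real.rpow_le_one_of_one_le_of_nonpos (by linarith) (by linarith)
    have h4 : (0:ℝ) < (1+h) ^ (-β) := Real.rpow_pos_of_pos h1 _
    have h5 : (1+h) ^ β * (1+h) ^ (-β) = 1 := by
      rw [← Real.rpow_add h1]; simp
    nlinarith [Real.rpow_pos_of_pos h1 β]

/-- `(x+1)^(-α) - (x+2)^(-α) ≤ α (x+1)^(-α-1)` for `α > 0`, `x ≥ 0`. -/
lemma stmt10_diff {α x : ℝ} (hα : 0 < α) (hx : 0 ≤ x) :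
    (x+1) ^ (-α) - (x+2) ^ (-α) ≤ α * (x+1) ^ (-α-1) := by
  have hx1 : (0:ℝ) < x + 1 := by linarith
  set h : ℝ := 1/(x+1) with hhdef
  have hh : 0 ≤ h := by positivity
  have h2 : x + 2 = (x+1) * (1+h) := by rw [hhdef]; field_simp; ring
  have h3 : (x+2:ℝ) ^ (-α) = (x+1) ^ (-α) * (1+h) ^ (-α) := by
    rw [h2, Real.mul_rpow hx1.le (by positivity)]
  have h4 : (x+1:ℝ) ^ (-α) * h = (x+1) ^ (-α-1) := by
    rw [show (-α-1 : ℝ) = -α + (-1) by ring, Real.rpow_add hx1, Real.rpow_neg_one, hhdef]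
    ring
  have hp : (0:ℝ) < (x+1) ^ (-α) := Real.rpow_pos_of_pos hx1 _
  have hb := stmt10_bern hα hh
  have h5 := mul_le_mul_of_nonneg_left (by linarith : 1 - (1+h) ^ (-α) ≤ α * h) hp.le
  rw [h3, ← h4]
  nlinarith

open Filter Topology

set_option maxHeartbeats 1000000 in
/-- linear/sublinear decay of a nonincreasing nonnegative sequence
satisfying the KL-type recurrence `Δ_{k+1} ≤ C₁(Δ_k − Δ_{k+1})^θ + C₂(Δ_k − Δ_{k+1})`. -/
theorem stmt10 (Δ : ℕ → ℝ) (hnn : ∀ k, 0 ≤ Δ k) (hanti : ∀ k, Δ (k + 1) ≤ Δ k)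
    (C₁ C₂ θ : ℝ) (hC₁ : 0 < C₁) (hC₂ : 0 < C₂) (hθ : 0 < θ)
    (hrec : ∀ k, Δ (k + 1) ≤ C₁ * (Δ k - Δ (k + 1)) ^ θ + C₂ * (Δ k - Δ (k + 1))) :
    (1 ≤ θ → ∃ c > (0 : ℝ), ∃ ρ ∈ Set.Ioo (0 : ℝ) 1, ∃ K : ℕ,
      ∀ k ≥ K, Δ k ≤ c * ρ ^ k) ∧
    (θ < 1 → ∃ c > (0 : ℝ), ∀ k : ℕ, 1 ≤ k →
      Δ k ≤ c * (k : ℝ) ^ (-θ / (1 - θ))) := by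
  have hanti' : Antitone Δ := antitone_nat_of_succ_le hanti
  have henn : ∀ k, 0 ≤ Δ k - Δ (k+1) := fun k => sub_nonneg.mpr (hanti k)
  have hbdd : BddBelow (Set.range Δ) := ⟨0, by rintro x ⟨k, rfl⟩; exact hnn k⟩
  have hL : Tendsto Δ atTop (𝓝 (⨅ k, Δ k)) := tendsto_atTop_ciInf hanti' hbdd
  have hL1 : Tendsto (fun k => Δ (k+1)) atTop (𝓝 (⨅ k, Δ k)) :=
    hL.comp (tendsto_add_atTop_nat 1)
  have heL : Tendsto (fun k => Δ k - Δ (k+1)) atTop (𝓝 0) := by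
    simpa using hL.sub hL1
  have hRHS : Tendsto (fun k => C₁ * (Δ k - Δ (k+1)) ^ θ + C₂ * (Δ k - Δ (k+1)))
      atTop (𝓝 0) := by
    have h1 : Tendsto (fun k => (Δ k - Δ (k+1)) ^ θ) atTop (𝓝 0) := by
      have := heL.rpow_const (p := θ) (Or.inr hθ.le)
      simpa [Real.zero_rpow hθ.ne'] using this
    have h2 := (h1.const_mul C₁).add (heL.const_mul C₂)
    simpa using h2
  have hL0 : (⨅ k, Δ k) = 0 := by
    have hge : 0 ≤ ⨅ k, Δ k := ge_of_tendsto' hL hnn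
    have hle : (⨅ k, Δ k) ≤ 0 := le_of_tendsto_of_tendsto' hL1 hRHS hrec
    linarith
  have hΔ0 : Tendsto Δ atTop (𝓝 0) := hL0 ▸ hL
  constructor
  · -- linear case
    intro hθ1
    obtain ⟨K, hK⟩ := eventually_atTop.mp (heL.eventually (gt_mem_nhds one_pos))
    set C := C₁ + C₂ with hCdef
    have hC : 0 < C := by positivity
    set ρ := C / (1 + C) with hρdef
    have hρ0 : 0 < ρ := div_pos hC (by linarith)
    have hρ1 : ρ < 1 := (div_lt_one (by linarith)).mpr (by linarith)
    have hstep : ∀ k, K ≤ k → Δ (k+1) ≤ ρ * Δ k := by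
      intro k hk
      have h1 : (Δ k - Δ (k+1)) ^ θ ≤ Δ k - Δ (k+1) := by
        rcases eq_or_lt_of_le (henn k) with h | h
        · rw [← h, Real.zero_rpow hθ.ne']
        · calc (Δ k - Δ (k+1)) ^ θ ≤ (Δ k - Δ (k+1)) ^ (1:ℝ) :=
                Real.rpow_le_rpow_of_exponent_ge h (hK k hk).le hθ1
            _ = Δ k - Δ (k+1) := Real.rpow_one _
      have h2 := hrec k
      have h3 : Δ (k+1) ≤ C * (Δ k - Δ (k+1)) := by
        rw [hCdef]; nlinarith
      rw [hρdef, div_mul_eq_mul_div, le_div_iff₀ (by linarith : (0:ℝ) < 1 + C)]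
      nlinarith
    have hgeo : ∀ n, Δ (K + n) ≤ Δ K * ρ ^ n := by
      intro n
      induction n with
      | zero => simp
      | succ n ih =>
        calc Δ (K + n + 1) ≤ ρ * Δ (K + n) := hstep (K + n) (Nat.le_add_right _ _)
          _ ≤ ρ * (Δ K * ρ ^ n) := mul_le_mul_of_nonneg_left ih hρ0.le
          _ = Δ K * ρ ^ (n + 1) := by ring
    refine ⟨(Δ K + 1) / ρ ^ K, div_pos (by linarith [hnn K]) (by positivity), ρ,
      ⟨hρ0, hρ1⟩, K, ?_⟩
    intro k hk
    have h1 := hgeo (k - K)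
    rw [show K + (k - K) = k by omega] at h1
    have h2 : ρ ^ k = ρ ^ K * ρ ^ (k - K) := by rw [← pow_add]; congr 1; omega
    have hρK : (0:ℝ) < ρ ^ K := by positivity
    have h3 : (Δ K + 1) / ρ ^ K * (ρ ^ K * ρ ^ (k - K)) = (Δ K + 1) * ρ ^ (k - K) := by
      field_simp
    rw [h2, h3]
    nlinarith [pow_nonneg hρ0.le (k - K)]
  · -- sublinear case
    intro hθ1
    obtain ⟨K, hK⟩ := eventually_atTop.mp (hΔ0.eventually (gt_mem_nhds one_pos))
    set C := C₁ + C₂ with hCdef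
    have hC : 0 < C := by positivity
    set p := 1/θ with hpdef
    have hp1 : 1 < p := by rw [hpdef, lt_div_iff₀ hθ]; linarith
    set α := θ/(1-θ) with hαdef
    have hα : 0 < α := div_pos hθ (by linarith)
    have hne : (1:ℝ) - θ ≠ 0 := by intro h; rw [sub_eq_zero] at h; linarith
    have hαp : α * p = α + 1 := by
      rw [hαdef, hpdef]; field_simp; ring
    have hCp : (0:ℝ) < C ^ p := Real.rpow_pos_of_pos hC _
    set c₀ := (C ^ p)⁻¹ with hc₀def
    have hc₀ : 0 < c₀ := by positivity
    have hkey : ∀ k, K ≤ k → c₀ * Δ (k+1) ^ p ≤ Δ k - Δ (k+1) := by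
      intro k hk
      set e := Δ k - Δ (k+1) with hedef
      have he0 : 0 ≤ e := henn k
      have he1 : e ≤ 1 := by
        have h1 := hnn (k+1); have h2 := (hK k hk).le
        rw [hedef]; linarith
      have heθ : 0 ≤ e ^ θ := Real.rpow_nonneg he0 _
      have h1 : e ≤ e ^ θ := by
        rcases eq_or_lt_of_le he0 with h | h
        · rw [← h, Real.zero_rpow hθ.ne']
        · calc e = e ^ (1:ℝ) := (Real.rpow_one _).symm
            _ ≤ e ^ θ := Real.rpow_le_rpow_of_exponent_ge h he1 hθ1.le
      have h2 : Δ (k+1) ≤ C * e ^ θ := by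
        have h3 := hrec k
        rw [← hedef] at h3
        rw [hCdef]; nlinarith
      have h4 : (e ^ θ) ^ p = e := by
        rw [← Real.rpow_mul he0, hpdef, mul_one_div_cancel hθ.ne', Real.rpow_one]
      have h3 : Δ (k+1) ^ p ≤ C ^ p * e := by
        calc Δ (k+1) ^ p ≤ (C * e ^ θ) ^ p := Real.rpow_le_rpow (hnn _) h2 (by linarith)
          _ = C ^ p * (e ^ θ) ^ p := Real.mul_rpow hC.le heθ
          _ = C ^ p * e := by rw [h4]
      calc c₀ * Δ (k+1) ^ p ≤ c₀ * (C ^ p * e) := mul_le_mul_of_nonneg_left h3 hc₀.le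
        _ = e := by rw [hc₀def]; field_simp
    set c₂ := max (Δ K + 1) ((α * 2 ^ (α+1) / c₀) ^ (1/(p-1))) with hc₂def
    have hc₂ : 0 < c₂ := lt_of_lt_of_le (by linarith [hnn K]) (le_max_left _ _)
    have h2α : (0:ℝ) < 2 ^ (α+1) := Real.rpow_pos_of_pos two_pos _
    have hc₂pow : α * 2 ^ (α+1) ≤ c₀ * c₂ ^ (p-1) := by
      have hB : (0:ℝ) ≤ α * 2 ^ (α+1) / c₀ := by positivity
      have h1 : (α * 2 ^ (α+1) / c₀) ^ (1/(p-1)) ≤ c₂ := le_max_right _ _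
      have h2 : (α * 2 ^ (α+1) / c₀) = ((α * 2 ^ (α+1) / c₀) ^ (1/(p-1))) ^ (p-1) := by
        rw [← Real.rpow_mul hB, one_div_mul_cancel (by linarith : p - 1 ≠ 0), Real.rpow_one]
      have h3 : ((α * 2 ^ (α+1) / c₀) ^ (1/(p-1))) ^ (p-1) ≤ c₂ ^ (p-1) :=
        Real.rpow_le_rpow (Real.rpow_nonneg hB _) h1 (by linarith)
      calc α * 2 ^ (α+1) = c₀ * (α * 2 ^ (α+1) / c₀) := by field_simp
        _ ≤ c₀ * c₂ ^ (p-1) :=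
          mul_le_mul_of_nonneg_left (le_trans (le_of_eq h2) h3) hc₀.le
    have hind : ∀ n : ℕ, Δ (K + n) ≤ c₂ * ((n:ℝ)+1) ^ (-α) := by
      intro n
      induction n with
      | zero =>
        simp only [Nat.cast_zero, zero_add, Real.one_rpow, mul_one, Nat.add_zero]
        calc Δ K ≤ Δ K + 1 := by linarith
          _ ≤ c₂ := le_max_left _ _
      | succ n ih =>
        by_contra hcon
        push_neg at hcon
        set x := (n:ℝ) with hxdef
        have hx0 : 0 ≤ x := Nat.cast_nonneg n
        have hx2 : (0:ℝ) < x + 2 := by linarith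
        have hcast : ((n+1:ℕ):ℝ) + 1 = x + 2 := by push_cast; ring
        rw [hcast] at hcon
        set t := c₂ * (x+2) ^ (-α) with htdef
        have ht : 0 < t := mul_pos hc₂ (Real.rpow_pos_of_pos hx2 _)
        have hb : t < Δ (K + n + 1) := hcon
        have h5 : t ^ p ≤ Δ (K+n+1) ^ p := Real.rpow_le_rpow ht.le hb.le (by linarith)
        have h6 : t + c₀ * t ^ p < Δ (K + n) := by
          have h7 := hkey (K+n) (Nat.le_add_right _ _)
          nlinarith [mul_le_mul_of_nonneg_left h5 hc₀.le]
        have htp : t ^ p = c₂ ^ p * (x+2) ^ (-(α+1)) := by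
          rw [htdef, Real.mul_rpow hc₂.le (Real.rpow_nonneg hx2.le _),
            ← Real.rpow_mul hx2.le,
            show (-α)*p = -(α+1) from by rw [neg_mul, hαp]]
        have h7 : 2 ^ (-(α+1)) * (x+1) ^ (-(α+1)) ≤ (x+2) ^ (-(α+1)) := by
          rw [← Real.mul_rpow (by norm_num) (by linarith)]
          exact Real.rpow_le_rpow_of_nonpos (by linarith)
            (by linarith : x+2 ≤ 2*(x+1)) (by linarith)
        have h8 : α * c₂ ≤ c₀ * c₂ ^ p * 2 ^ (-(α+1)) := by
          have hsplit : c₂ ^ p = c₂ ^ (p-1) * c₂ := by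
            rw [show p = (p-1)+1 from by ring, Real.rpow_add_one hc₂.ne']
            ring_nf
          have h2inv : (2:ℝ) ^ (-(α+1)) = (2 ^ (α+1))⁻¹ := by
            rw [← Real.rpow_neg (by norm_num)]
          have h9 := mul_le_mul_of_nonneg_right hc₂pow hc₂.le
          calc α * c₂ = α * 2 ^ (α+1) * c₂ * (2 ^ (α+1))⁻¹ := by field_simp
            _ ≤ c₀ * c₂ ^ (p-1) * c₂ * (2 ^ (α+1))⁻¹ := by
                exact mul_le_mul_of_nonneg_right h9 (by positivity)
            _ = c₀ * c₂ ^ p * 2 ^ (-(α+1)) := by rw [hsplit, h2inv]; ring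
        have hA : α * c₂ * (x+1) ^ (-(α+1)) ≤ c₀ * t ^ p := by
          rw [htp]
          have hP : (0:ℝ) ≤ (x+1) ^ (-(α+1)) := Real.rpow_nonneg (by linarith) _
          calc α * c₂ * (x+1) ^ (-(α+1))
              ≤ (c₀ * c₂ ^ p * 2 ^ (-(α+1))) * (x+1) ^ (-(α+1)) :=
                mul_le_mul_of_nonneg_right h8 hP
            _ = (c₀ * c₂ ^ p) * (2 ^ (-(α+1)) * (x+1) ^ (-(α+1))) := by ring
            _ ≤ (c₀ * c₂ ^ p) * (x+2) ^ (-(α+1)) := by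
                refine mul_le_mul_of_nonneg_left h7 ?_
                positivity
            _ = c₀ * (c₂ ^ p * (x+2) ^ (-(α+1))) := by ring
        have hD := stmt10_diff hα hx0
        rw [show (-α-1:ℝ) = -(α+1) from by ring] at hD
        have hD2 : c₂ * (x+1) ^ (-α) - c₂ * (x+2) ^ (-α) ≤ α * c₂ * (x+1) ^ (-(α+1)) := by
          nlinarith [hD, hc₂.le]
        have hnum : c₂ * (x+1) ^ (-α) ≤ t + c₀ * t ^ p := by
          rw [htdef]; linarith
        have hih : Δ (K + n) ≤ c₂ * (x+1) ^ (-α) := ih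
        linarith
    have hKα : (0:ℝ) < ((K:ℝ)+1) ^ α := Real.rpow_pos_of_pos (by positivity) _
    have h4 : ((K:ℝ)+1) ^ α * ((K:ℝ)+1) ^ (-α) = 1 := by
      rw [← Real.rpow_add (by positivity), add_neg_cancel, Real.rpow_zero]
    have hΔ00 := hnn 0
    refine ⟨(c₂ + Δ 0 + 1) * ((K:ℝ)+1) ^ α,
      mul_pos (by linarith) hKα, ?_⟩
    intro k hk
    have hexp : -θ/(1-θ) = -α := by rw [hαdef, neg_div]
    rw [hexp]
    have hk0 : (0:ℝ) < (k:ℝ) := by exact_mod_cast hk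
    have hkα : (0:ℝ) < (k:ℝ) ^ (-α) := Real.rpow_pos_of_pos hk0 _
    rcases le_or_gt K k with hKk | hKk
    · set n := k - K with hndef
      have hkn : k = K + n := by omega
      have h1 : Δ k ≤ c₂ * ((n:ℝ)+1) ^ (-α) := by rw [hkn]; exact hind n
      have hn1 : (0:ℝ) < (n:ℝ)+1 := by positivity
      have hnα : (0:ℝ) < ((n:ℝ)+1) ^ (-α) := Real.rpow_pos_of_pos hn1 _
      have hcast : (k:ℝ) ≤ ((K:ℝ)+1) * ((n:ℝ)+1) := by
        have hkr : (k:ℝ) = (K:ℝ) + (n:ℝ) := by rw [hkn]; push_cast; ring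
        nlinarith [(Nat.cast_nonneg K : (0:ℝ) ≤ (K:ℝ)), (Nat.cast_nonneg n : (0:ℝ) ≤ (n:ℝ))]
      have h2 : (((K:ℝ)+1) * ((n:ℝ)+1)) ^ (-α) ≤ (k:ℝ) ^ (-α) :=
        Real.rpow_le_rpow_of_nonpos hk0 hcast (by linarith)
      have h3 : (((K:ℝ)+1) * ((n:ℝ)+1)) ^ (-α) = ((K:ℝ)+1) ^ (-α) * ((n:ℝ)+1) ^ (-α) :=
        Real.mul_rpow (by positivity) hn1.le
      rw [h3] at h2
      have h5 := mul_le_mul_of_nonneg_left h2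
        (mul_nonneg (by linarith : (0:ℝ) ≤ c₂ + Δ 0 + 1) hKα.le)
      have h6 : (c₂ + Δ 0 + 1) * ((K:ℝ)+1) ^ α * (((K:ℝ)+1) ^ (-α) * ((n:ℝ)+1) ^ (-α))
          = (c₂ + Δ 0 + 1) * ((n:ℝ)+1) ^ (-α) := by
        linear_combination (c₂ + Δ 0 + 1) * ((n:ℝ)+1) ^ (-α) * h4
      have h7 : c₂ * ((n:ℝ)+1) ^ (-α) ≤ (c₂ + Δ 0 + 1) * ((n:ℝ)+1) ^ (-α) :=
        mul_le_mul_of_nonneg_right (by linarith) hnα.le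
      linarith
    · have h1 : Δ k ≤ Δ 0 := hanti' (Nat.zero_le k)
      have hcast : (k:ℝ) ≤ (K:ℝ)+1 := by
        have : (k:ℝ) ≤ (K:ℝ) := Nat.cast_le.mpr hKk.le
        linarith
      have h2 : ((K:ℝ)+1) ^ (-α) ≤ (k:ℝ) ^ (-α) :=
        Real.rpow_le_rpow_of_nonpos hk0 hcast (by linarith)
      have h5 := mul_le_mul_of_nonneg_left h2
        (mul_nonneg (by linarith : (0:ℝ) ≤ c₂ + Δ 0 + 1) hKα.le)
      have h6 : (c₂ + Δ 0 + 1) * ((K:ℝ)+1) ^ α * ((K:ℝ)+1) ^ (-α) = c₂ + Δ 0 + 1 := by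
        linear_combination (c₂ + Δ 0 + 1) * h4
      linarith
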